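/- arXiv:2502.00976 — 2 statements merged into one kernel-verified Lean document; each statement's English description precedes it below -/
import Mathlib

section
/- The Müntz–Laguerre functions φ₁(s) = √(2 Re b₁)/(s + b₁) and φ_k(s) = (√(2 Re b_k)/(s + b_k)) · ∏_{k'=1}^{k−1} (s − conj(b_{k'}))/(s + b_{k'}) for k ≥ 2, with Re b_k > 0 for all k, form an orthonormal system in the Hardy space H² of the right half-plane; that is, (1/2π) ∫_{−∞}^{∞} φ_j(iω) · conj(φ_k(iω)) dω = δ_{jk}. -/
open Complex MeasureTheory Finset Set Filter Topology
open scoped Interval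

noncomputable section

namespace ML


lemma re_le_norm_sub_conj {s c : ℂ} (hs : s.re ≤ 0) (hc : 0 < c.re) :
    c.re ≤ ‖s - (starRingEnd ℂ) c‖ := by
  have h1 : c.re ≤ |(s - (starRingEnd ℂ) c).re| := by
    rw [Complex.sub_re, Complex.conj_re]
    exact le_abs.2 (Or.inr (by linarith))
  exact h1.trans (Complex.abs_re_le_norm _)

lemma sub_conj_ne_zero {s c : ℂ} (hs : s.re ≤ 0) (hc : 0 < c.re) :
    s - (starRingEnd ℂ) c ≠ 0 := by
  intro h
  have := re_le_norm_sub_conj hs hc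
  rw [h] at this; simp at this; linarith

lemma norm_add_le_norm_sub_conj {s c : ℂ} (hs : s.re ≤ 0) (hc : 0 < c.re) :
    ‖s + c‖ ≤ ‖s - (starRingEnd ℂ) c‖ := by
  rw [Complex.norm_def, Complex.norm_def]
  apply Real.sqrt_le_sqrt
  rw [Complex.normSq_apply, Complex.normSq_apply]
  simp only [Complex.add_re, Complex.add_im, Complex.sub_re, Complex.sub_im,
    Complex.conj_re, Complex.conj_im]
  nlinarith [mul_nonneg (neg_nonneg.2 hs) hc.le]

lemma ne_zero_of_re_pos' {z : ℂ} (h : 0 < z.re) : z ≠ 0 := by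
  intro h0; rw [h0] at h; simp at h

lemma alg_id (cj ck u p q A P : ℂ) (hu : u ≠ 0) (hp : p ≠ 0) (hq : q ≠ 0) (hA : A ≠ 0) :
    cj / u * A * (ck / q * (A⁻¹ * (u / p * P))) = cj * ck / (p * q) * P := by
  field_simp

lemma line_integral_zero (g : ℂ → ℂ) (C R₀ : ℝ) (hR₀ : 1 ≤ R₀) (hC : 0 ≤ C)
    (hd : ∀ s : ℂ, s.re ≤ 0 → DifferentiableAt ℂ g s)
    (hbound : ∀ s : ℂ, s.re ≤ 0 → R₀ ≤ ‖s‖ → ‖g s‖ ≤ C / ‖s‖ ^ 2)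
    (hint : Integrable fun ω : ℝ => g (ω * I)) :
    (∫ ω : ℝ, g (ω * I)) = 0 := by
  have h1 : Tendsto (fun R : ℝ => ∫ y in (-R)..R, g (y * I)) atTop
      (𝓝 (∫ ω : ℝ, g (ω * I))) :=
    intervalIntegral_tendsto_integral hint tendsto_neg_atTop_atBot tendsto_id
  have key : ∀ R : ℝ, R₀ ≤ R → ‖∫ y in (-R)..R, g (y * I)‖ ≤ 4 * C / R := by
    intro R hR
    have hR1 : (1:ℝ) ≤ R := hR₀.trans hR
    have hR0 : (0:ℝ) < R := lt_of_lt_of_le one_pos hR1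
    have Hdiff : DifferentiableOn ℂ g
        ([[(⟨-R,-R⟩:ℂ).re, (⟨0,R⟩:ℂ).re]] ×ℂ [[(⟨-R,-R⟩:ℂ).im, (⟨0,R⟩:ℂ).im]]) := by
      intro x hx
      refine (hd x ?_).differentiableWithinAt
      have h2 : x.re ∈ [[(-R:ℝ), 0]] := hx.1
      rw [Set.uIcc_of_le (by linarith : (-R:ℝ) ≤ 0)] at h2
      exact h2.2
    have rect : (∫ x in (-R:ℝ)..0, g (↑x + ↑(-R:ℝ) * I)) -
        (∫ x in (-R:ℝ)..0, g (↑x + ↑(R:ℝ) * I)) +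
        I • (∫ y in (-R:ℝ)..R, g (↑(0:ℝ) + ↑y * I)) -
        I • (∫ y in (-R:ℝ)..R, g (↑(-R:ℝ) + ↑y * I)) = 0 :=
      Complex.integral_boundary_rect_eq_zero_of_differentiableOn g ⟨-R,-R⟩ ⟨0,R⟩ Hdiff
    simp only [Complex.ofReal_zero, zero_add] at rect
    have hedge : ∀ c : ℝ, |c| = R → ‖∫ x in (-R:ℝ)..0, g (↑x + ↑c * I)‖ ≤ C / R := by
      intro c hc
      have h3 : ‖∫ x in (-R:ℝ)..0, g (↑x + ↑c * I)‖ ≤ C / R ^ 2 * |0 - (-R)| := by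
        apply intervalIntegral.norm_integral_le_of_norm_le_const
        intro x hx
        rw [Set.uIoc_of_le (by linarith : (-R:ℝ) ≤ 0)] at hx
        have hre : ((x:ℂ) + c * I).re ≤ 0 := by simpa using hx.2
        have hnorm : R ≤ ‖(x:ℂ) + c * I‖ := by
          have h4 : |((x:ℂ) + c * I).im| ≤ ‖(x:ℂ) + c * I‖ :=
            Complex.abs_im_le_norm _
          simpa [hc] using h4
        calc ‖g ((x:ℂ) + c * I)‖ ≤ C / ‖(x:ℂ) + c * I‖ ^ 2 :=
              hbound _ hre (hR.trans hnorm)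
          _ ≤ C / R ^ 2 := by gcongr
      refine h3.trans_eq ?_
      rw [abs_of_pos (by linarith : (0:ℝ) < 0 - -R)]
      field_simp
      ring
    have hleft : ‖∫ y in (-R:ℝ)..R, g (↑(-R:ℝ) + ↑y * I)‖ ≤ 2 * C / R := by
      have h3 : ‖∫ y in (-R:ℝ)..R, g (↑(-R:ℝ) + ↑y * I)‖ ≤ C / R ^ 2 * |R - (-R)| := by
        apply intervalIntegral.norm_integral_le_of_norm_le_const
        intro y _
        have hre : ((↑(-R:ℝ):ℂ) + ↑y * I).re ≤ 0 := by simp; linarith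
        have hnorm : R ≤ ‖(↑(-R:ℝ):ℂ) + ↑y * I‖ := by
          have h4 : |((↑(-R:ℝ):ℂ) + ↑y * I).re| ≤ ‖(↑(-R:ℝ):ℂ) + ↑y * I‖ :=
            Complex.abs_re_le_norm _
          simpa [abs_of_pos hR0] using h4
        calc ‖g ((↑(-R:ℝ):ℂ) + ↑y * I)‖ ≤ C / ‖(↑(-R:ℝ):ℂ) + ↑y * I‖ ^ 2 :=
              hbound _ hre (hR.trans hnorm)
          _ ≤ C / R ^ 2 := by gcongr
      refine h3.trans_eq ?_
      rw [abs_of_pos (by linarith : (0:ℝ) < R - -R)]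
      field_simp
      ring
    have heq : I • (∫ y in (-R:ℝ)..R, g (↑y * I)) =
        (∫ x in (-R:ℝ)..0, g (↑x + ↑(R:ℝ) * I)) - (∫ x in (-R:ℝ)..0, g (↑x + ↑(-R:ℝ) * I))
          + I • (∫ y in (-R:ℝ)..R, g (↑(-R:ℝ) + ↑y * I)) := by
      linear_combination rect
    have hnorm1 : ‖∫ y in (-R:ℝ)..R, g (↑y * I)‖ =
        ‖I • (∫ y in (-R:ℝ)..R, g (↑y * I))‖ := by
      rw [smul_eq_mul, norm_mul, Complex.norm_I, one_mul]
    rw [hnorm1, heq]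
    have e1 := hedge R (abs_of_pos hR0)
    have e2 := hedge (-R) (by rw [abs_neg]; exact abs_of_pos hR0)
    have e3 : ‖I • (∫ y in (-R:ℝ)..R, g (↑(-R:ℝ) + ↑y * I))‖ ≤ 2 * C / R := by
      rw [smul_eq_mul, norm_mul, Complex.norm_I, one_mul]; exact hleft
    calc ‖_‖ ≤ ‖(∫ x in (-R:ℝ)..0, g (↑x + ↑(R:ℝ) * I)) -
          (∫ x in (-R:ℝ)..0, g (↑x + ↑(-R:ℝ) * I))‖
          + ‖I • (∫ y in (-R:ℝ)..R, g (↑(-R:ℝ) + ↑y * I))‖ := norm_add_le _ _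
      _ ≤ ‖(∫ x in (-R:ℝ)..0, g (↑x + ↑(R:ℝ) * I))‖ +
          ‖(∫ x in (-R:ℝ)..0, g (↑x + ↑(-R:ℝ) * I))‖
          + ‖I • (∫ y in (-R:ℝ)..R, g (↑(-R:ℝ) + ↑y * I))‖ := by
            gcongr
            exact norm_sub_le _ _
      _ ≤ C / R + C / R + 2 * C / R := by gcongr
      _ = 4 * C / R := by ring
  have h2 : Tendsto (fun R : ℝ => ∫ y in (-R)..R, g (y * I)) atTop (𝓝 0) := by
    apply squeeze_zero_norm' (Filter.eventually_atTop.2 ⟨R₀, key⟩)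
    simpa using (tendsto_const_nhds (x := (4*C : ℝ))).div_atTop tendsto_id
  exact tendsto_nhds_unique h1 h2

lemma offdiag (b : ℕ → ℂ) (hb : ∀ k, 0 < (b k).re) (φ : ℕ → ℂ → ℂ)
    (hφ : ∀ k s, φ k s = (Real.sqrt (2 * (b k).re) : ℂ) / (s + b k) *
      ∏ k' ∈ Finset.range k, (s - (starRingEnd ℂ) (b k')) / (s + b k'))
    {j k : ℕ} (hjk : j < k) :
    (∫ ω : ℝ, φ j (ω * I) * (starRingEnd ℂ) (φ k (ω * I))) = 0 := by
  set cj : ℂ := (Real.sqrt (2 * (b j).re) : ℂ) with hcj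
  set ck : ℂ := (Real.sqrt (2 * (b k).re) : ℂ) with hck
  set G : ℂ → ℂ := fun s => cj * ck /
      ((s - (starRingEnd ℂ) (b j)) * ((starRingEnd ℂ) (b k) - s)) *
      ∏ m ∈ Finset.Ico (j+1) k, (s + b m) / (s - (starRingEnd ℂ) (b m)) with hG
  have hne2 : ∀ s : ℂ, s.re ≤ 0 → ∀ m : ℕ, s - (starRingEnd ℂ) (b m) ≠ 0 :=
    fun s hs m => sub_conj_ne_zero hs (hb m)
  have hne3 : ∀ s : ℂ, s.re ≤ 0 → (starRingEnd ℂ) (b k) - s ≠ 0 := by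
    intro s hs
    apply ne_zero_of_re_pos'
    simp only [Complex.sub_re, Complex.conj_re]
    linarith [hb k]
  have hd : ∀ s : ℂ, s.re ≤ 0 → DifferentiableAt ℂ G s := by
    intro s hs
    apply DifferentiableAt.mul
    · exact (differentiableAt_const _).div
        (((differentiableAt_id.sub (differentiableAt_const _))).mul
          ((differentiableAt_const _).sub differentiableAt_id))
        (mul_ne_zero (hne2 s hs j) (hne3 s hs))
    · apply DifferentiableAt.fun_finsetProd
      intro m _
      exact (differentiableAt_id.add (differentiableAt_const _)).div
        (differentiableAt_id.sub (differentiableAt_const _)) (hne2 s hs m)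
  have hP : ∀ s : ℂ, s.re ≤ 0 →
      ‖∏ m ∈ Finset.Ico (j+1) k, (s + b m) / (s - (starRingEnd ℂ) (b m))‖ ≤ 1 := by
    intro s hs
    rw [norm_prod]
    apply Finset.prod_le_one (fun m _ => norm_nonneg _)
    intro m _
    rw [norm_div]
    exact div_le_one_of_le₀ (norm_add_le_norm_sub_conj hs (hb m)) (norm_nonneg _)
  have hGnorm : ∀ s : ℂ, ‖G s‖ = ‖cj‖ * ‖ck‖ /
      (‖s - (starRingEnd ℂ) (b j)‖ * ‖(starRingEnd ℂ) (b k) - s‖) *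
      ‖∏ m ∈ Finset.Ico (j+1) k, (s + b m) / (s - (starRingEnd ℂ) (b m))‖ := by
    intro s
    rw [hG]
    simp only [norm_mul, norm_div]
  set B0 : ℝ := ‖cj‖ * ‖ck‖ / ((b j).re * (b k).re) with hB0
  have hGsmall : ∀ s : ℂ, s.re ≤ 0 → ‖G s‖ ≤ B0 := by
    intro s hs
    rw [hGnorm s]
    calc ‖cj‖ * ‖ck‖ / (‖s - (starRingEnd ℂ) (b j)‖ * ‖(starRingEnd ℂ) (b k) - s‖) *
          ‖∏ m ∈ Finset.Ico (j+1) k, (s + b m) / (s - (starRingEnd ℂ) (b m))‖ ≤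
        ‖cj‖ * ‖ck‖ / (‖s - (starRingEnd ℂ) (b j)‖ * ‖(starRingEnd ℂ) (b k) - s‖) :=
          mul_le_of_le_one_right (by positivity) (hP s hs)
      _ ≤ B0 := by
          rw [hB0]
          exact div_le_div_of_nonneg_left (by positivity) (mul_pos (hb j) (hb k))
            (mul_le_mul (re_le_norm_sub_conj hs (hb j))
              ((re_le_norm_sub_conj hs (hb k)).trans (norm_sub_rev s _).le)
              (hb k).le (norm_nonneg _))
  set R₀ : ℝ := 2 * ‖b j‖ + 2 * ‖b k‖ + 1 with hR₀def
  have hR₀1 : (1:ℝ) ≤ R₀ := by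
    rw [hR₀def]
    have := norm_nonneg (b j); have := norm_nonneg (b k); linarith
  set C : ℝ := 4 * (‖cj‖ * ‖ck‖) with hCdef
  have hCnonneg : 0 ≤ C := by rw [hCdef]; positivity
  have hconjnorm : ∀ z : ℂ, ‖(starRingEnd ℂ) z‖ = ‖z‖ := by
    intro z
    rw [Complex.norm_conj]
  have hGbig : ∀ s : ℂ, s.re ≤ 0 → R₀ ≤ ‖s‖ → ‖G s‖ ≤ C / ‖s‖ ^ 2 := by
    intro s hs hRs
    have hs0 : (1:ℝ) ≤ ‖s‖ := le_trans hR₀1 hRs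
    have hspos : (0:ℝ) < ‖s‖ := lt_of_lt_of_le one_pos hs0
    have hbj : ‖s‖ / 2 ≤ ‖s - (starRingEnd ℂ) (b j)‖ := by
      have h5 : ‖s‖ - ‖(starRingEnd ℂ) (b j)‖ ≤ ‖s - (starRingEnd ℂ) (b j)‖ :=
        norm_sub_norm_le _ _
      rw [hconjnorm] at h5
      have h7 : ‖b j‖ ≤ ‖s‖ / 2 := by
        rw [hR₀def] at hRs
        have := norm_nonneg (b k); linarith
      linarith
    have hbk : ‖s‖ / 2 ≤ ‖(starRingEnd ℂ) (b k) - s‖ := by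
      rw [norm_sub_rev]
      have h5 : ‖s‖ - ‖(starRingEnd ℂ) (b k)‖ ≤ ‖s - (starRingEnd ℂ) (b k)‖ :=
        norm_sub_norm_le _ _
      rw [hconjnorm] at h5
      have h7 : ‖b k‖ ≤ ‖s‖ / 2 := by
        rw [hR₀def] at hRs
        have := norm_nonneg (b j); linarith
      linarith
    rw [hGnorm s]
    calc ‖cj‖ * ‖ck‖ / (‖s - (starRingEnd ℂ) (b j)‖ * ‖(starRingEnd ℂ) (b k) - s‖) *
          ‖∏ m ∈ Finset.Ico (j+1) k, (s + b m) / (s - (starRingEnd ℂ) (b m))‖ ≤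
        ‖cj‖ * ‖ck‖ / (‖s - (starRingEnd ℂ) (b j)‖ * ‖(starRingEnd ℂ) (b k) - s‖) :=
          mul_le_of_le_one_right (by positivity) (hP s hs)
      _ ≤ ‖cj‖ * ‖ck‖ / (‖s‖ / 2 * (‖s‖ / 2)) :=
          div_le_div_of_nonneg_left (by positivity) (by positivity)
            (mul_le_mul hbj hbk (by positivity) (norm_nonneg _))
      _ = C / ‖s‖ ^ 2 := by
          rw [hCdef]
          have hns : ‖s‖ ≠ 0 := ne_of_gt hspos
          field_simp
          ring
  have hre0 : ∀ ω : ℝ, ((ω : ℂ) * I).re = 0 := by intro ω; simp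
  have hcont : Continuous fun ω : ℝ => G ((ω : ℂ) * I) := by
    rw [continuous_iff_continuousAt]
    intro ω
    have h5 : ContinuousAt (fun ω : ℝ => (ω : ℂ) * I) ω := by fun_prop
    exact ContinuousAt.comp (x := ω) (g := G) (hd _ (le_of_eq (hre0 ω))).continuousAt h5
  set K : ℝ := max (B0 * (1 + R₀ ^ 2)) (2 * C) with hK
  have hB0nonneg : 0 ≤ B0 := by
    rw [hB0]
    exact div_nonneg (by positivity) (mul_pos (hb j) (hb k)).le
  have hint : Integrable fun ω : ℝ => G ((ω : ℂ) * I) := by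
    apply Integrable.mono' ((integrable_inv_one_add_sq).const_mul K)
      hcont.aestronglyMeasurable
    filter_upwards with ω
    have hωnorm : ‖(ω : ℂ) * I‖ = |ω| := by
      rw [norm_mul, Complex.norm_I, mul_one, Complex.norm_real, Real.norm_eq_abs]
    have h3 : (0:ℝ) < 1 + ω ^ 2 := by positivity
    rcases le_or_gt (|ω|) R₀ with h | h
    · have h1 : ‖G ((ω : ℂ) * I)‖ ≤ B0 := hGsmall _ (le_of_eq (hre0 ω))
      have h2 : (1 + ω ^ 2) ≤ 1 + R₀ ^ 2 := by
        nlinarith [abs_nonneg ω, _root_.sq_abs ω]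
      calc ‖G ((ω : ℂ) * I)‖ ≤ B0 := h1
        _ ≤ B0 * (1 + R₀ ^ 2) * (1 + ω ^ 2)⁻¹ := by
            rw [← div_eq_mul_inv, le_div_iff₀ h3]
            nlinarith
        _ ≤ K * (1 + ω ^ 2)⁻¹ := by
            gcongr
            exact le_max_left _ _
    · have hωR : R₀ ≤ ‖(ω : ℂ) * I‖ := by rw [hωnorm]; exact h.le
      have h1 : ‖G ((ω : ℂ) * I)‖ ≤ C / ‖(ω : ℂ) * I‖ ^ 2 :=
        hGbig _ (le_of_eq (hre0 ω)) hωR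
      have hω1 : (1:ℝ) ≤ ω ^ 2 := by
        nlinarith [hR₀1, _root_.sq_abs ω, abs_nonneg ω]
      calc ‖G ((ω : ℂ) * I)‖ ≤ C / ‖(ω : ℂ) * I‖ ^ 2 := h1
        _ = C / ω ^ 2 := by rw [hωnorm, _root_.sq_abs]
        _ ≤ 2 * C * (1 + ω ^ 2)⁻¹ := by
            rw [← div_eq_mul_inv, div_le_div_iff₀ (by nlinarith) h3]
            nlinarith
        _ ≤ K * (1 + ω ^ 2)⁻¹ := by
            gcongr
            exact le_max_right _ _
  have hzero : (∫ ω : ℝ, G ((ω : ℂ) * I)) = 0 :=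
    line_integral_zero G C R₀ hR₀1 hCnonneg hd hGbig hint
  have hid : ∀ ω : ℝ, φ j ((ω : ℂ) * I) * (starRingEnd ℂ) (φ k ((ω : ℂ) * I)) =
      G ((ω : ℂ) * I) := by
    intro ω
    set s : ℂ := (ω : ℂ) * I with hsdef
    have hs0 : s.re ≤ 0 := le_of_eq (hre0 ω)
    have hconjs : (starRingEnd ℂ) s = -s := by
      rw [hsdef, map_mul, Complex.conj_ofReal, Complex.conj_I]
      ring
    have hsplus : ∀ m : ℕ, s + b m ≠ 0 := by
      intro m
      apply ne_zero_of_re_pos'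
      rw [Complex.add_re, hsdef]
      simpa using hb m
    have hsminus : ∀ m : ℕ, s - (starRingEnd ℂ) (b m) ≠ 0 := hne2 s hs0
    have hq : (starRingEnd ℂ) (b k) - s ≠ 0 := hne3 s hs0
    have hconjφ : (starRingEnd ℂ) (φ k s) = ck / ((starRingEnd ℂ) (b k) - s) *
        ∏ m ∈ Finset.range k, (s + b m) / (s - (starRingEnd ℂ) (b m)) := by
      rw [hφ k s, map_mul, map_div₀, map_prod]
      congr 1
      · rw [← hck]
        rw [map_add, hconjs]
        congr 1
        · rw [hck, Complex.conj_ofReal]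
        · ring
      · apply Finset.prod_congr rfl
        intro m _
        rw [map_div₀, map_sub, map_add, Complex.conj_conj, hconjs]
        rw [show -s - b m = -(s + b m) by ring,
          show -s + (starRingEnd ℂ) (b m) = -(s - (starRingEnd ℂ) (b m)) by ring,
          neg_div_neg_eq]
    have hsplit : ∏ m ∈ Finset.range k, (s + b m) / (s - (starRingEnd ℂ) (b m)) =
        (∏ m ∈ Finset.range j, (s + b m) / (s - (starRingEnd ℂ) (b m))) *
          ((s + b j) / (s - (starRingEnd ℂ) (b j)) *
            ∏ m ∈ Finset.Ico (j+1) k, (s + b m) / (s - (starRingEnd ℂ) (b m))) := by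
      rw [← Finset.prod_range_mul_prod_Ico _ hjk.le, Finset.prod_eq_prod_Ico_succ_bot hjk]
    have hA0 : (∏ m ∈ Finset.range j, (s - (starRingEnd ℂ) (b m)) / (s + b m)) ≠ 0 := by
      apply Finset.prod_ne_zero_iff.2
      intro m _
      exact div_ne_zero (hsminus m) (hsplus m)
    have hAB : (∏ m ∈ Finset.range j, (s - (starRingEnd ℂ) (b m)) / (s + b m)) *
        (∏ m ∈ Finset.range j, (s + b m) / (s - (starRingEnd ℂ) (b m))) = 1 := by
      rw [← Finset.prod_mul_distrib]
      apply Finset.prod_eq_one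
      intro m _
      rw [div_mul_div_comm, mul_comm (s - (starRingEnd ℂ) (b m)) (s + b m),
        div_self (mul_ne_zero (hsplus m) (hsminus m))]
    have hBinv : (∏ m ∈ Finset.range j, (s + b m) / (s - (starRingEnd ℂ) (b m))) =
        (∏ m ∈ Finset.range j, (s - (starRingEnd ℂ) (b m)) / (s + b m))⁻¹ :=
      eq_inv_of_mul_eq_one_right hAB
    rw [hφ j s, hconjφ, hsplit, hBinv]
    show cj / (s + b j) * (∏ m ∈ Finset.range j, (s - (starRingEnd ℂ) (b m)) / (s + b m)) *
        (ck / ((starRingEnd ℂ) (b k) - s) *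
          ((∏ m ∈ Finset.range j, (s - (starRingEnd ℂ) (b m)) / (s + b m))⁻¹ *
            ((s + b j) / (s - (starRingEnd ℂ) (b j)) *
              ∏ m ∈ Finset.Ico (j+1) k, (s + b m) / (s - (starRingEnd ℂ) (b m))))) =
      cj * ck / ((s - (starRingEnd ℂ) (b j)) * ((starRingEnd ℂ) (b k) - s)) *
        ∏ m ∈ Finset.Ico (j+1) k, (s + b m) / (s - (starRingEnd ℂ) (b m))
    exact alg_id cj ck (s + b j) (s - (starRingEnd ℂ) (b j)) ((starRingEnd ℂ) (b k) - s)
      (∏ m ∈ Finset.range j, (s - (starRingEnd ℂ) (b m)) / (s + b m))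
      (∏ m ∈ Finset.Ico (j+1) k, (s + b m) / (s - (starRingEnd ℂ) (b m)))
      (hsplus j) (hsminus j) hq hA0
  calc (∫ ω : ℝ, φ j (ω * I) * (starRingEnd ℂ) (φ k (ω * I)))
      = ∫ ω : ℝ, G ((ω : ℂ) * I) := by
        congr 1
        funext ω
        exact hid ω
    _ = 0 := hzero



lemma alg_id2 (a u q P1 P2 : ℂ) :
    a / u * P1 * (a / q * P2) = a * a / (u * q) * (P1 * P2) := by ring

lemma real_int (x y : ℝ) (hx : 0 < x) :
    (∫ ω : ℝ, 2 * x / (x ^ 2 + (ω + y) ^ 2)) = 2 * Real.pi := by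
  have step1 : (∫ ω : ℝ, 2 * x / (x ^ 2 + (ω + y) ^ 2)) =
      ∫ ω : ℝ, 2 * x / (x ^ 2 + ω ^ 2) :=
    integral_add_right_eq_self (fun u : ℝ => 2 * x / (x ^ 2 + u ^ 2)) y
  rw [step1]
  have step2 : ∀ ω : ℝ, 2 * x / (x ^ 2 + ω ^ 2) =
      (fun u : ℝ => 2 / x * (1 + u ^ 2)⁻¹) (x⁻¹ * ω) := by
    intro ω
    have hx2 : (0:ℝ) < x ^ 2 + ω ^ 2 := by positivity
    field_simp
  calc (∫ ω : ℝ, 2 * x / (x ^ 2 + ω ^ 2))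
      = ∫ ω : ℝ, (fun u : ℝ => 2 / x * (1 + u ^ 2)⁻¹) (x⁻¹ * ω) := by
        congr 1; funext ω; exact step2 ω
    _ = |x| • ∫ u : ℝ, 2 / x * (1 + u ^ 2)⁻¹ :=
        Measure.integral_comp_inv_mul_left (fun u : ℝ => 2 / x * (1 + u ^ 2)⁻¹) x
    _ = 2 * Real.pi := by
        rw [integral_const_mul, integral_univ_inv_one_add_sq, abs_of_pos hx,
          smul_eq_mul]
        field_simp

lemma diag (b : ℕ → ℂ) (hb : ∀ k, 0 < (b k).re) (φ : ℕ → ℂ → ℂ)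
    (hφ : ∀ k s, φ k s = (Real.sqrt (2 * (b k).re) : ℂ) / (s + b k) *
      ∏ k' ∈ Finset.range k, (s - (starRingEnd ℂ) (b k')) / (s + b k'))
    (k : ℕ) :
    (1 / (2 * Real.pi) : ℂ) *
      ∫ ω : ℝ, φ k (ω * I) * (starRingEnd ℂ) (φ k (ω * I)) = 1 := by
  have hx0 : 0 < (b k).re := hb k
  have hid : ∀ ω : ℝ, φ k ((ω : ℂ) * I) * (starRingEnd ℂ) (φ k ((ω : ℂ) * I)) =
      ((2 * (b k).re / ((b k).re ^ 2 + (ω + (b k).im) ^ 2) : ℝ) : ℂ) := by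
    intro ω
    set s : ℂ := (ω : ℂ) * I with hsdef
    have hs0 : s.re ≤ 0 := by rw [hsdef]; simp
    have hconjs : (starRingEnd ℂ) s = -s := by
      rw [hsdef, map_mul, Complex.conj_ofReal, Complex.conj_I]
      ring
    have hsplus : ∀ m : ℕ, s + b m ≠ 0 := by
      intro m
      apply ne_zero_of_re_pos'
      rw [Complex.add_re, hsdef]
      simpa using hb m
    have hsminus : ∀ m : ℕ, s - (starRingEnd ℂ) (b m) ≠ 0 :=
      fun m => sub_conj_ne_zero hs0 (hb m)
    have hconjφ : (starRingEnd ℂ) (φ k s) =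
        (Real.sqrt (2 * (b k).re) : ℂ) / ((starRingEnd ℂ) (b k) - s) *
        ∏ m ∈ Finset.range k, (s + b m) / (s - (starRingEnd ℂ) (b m)) := by
      rw [hφ k s, map_mul, map_div₀, map_prod]
      congr 1
      · rw [map_add, hconjs]
        congr 1
        · rw [Complex.conj_ofReal]
        · ring
      · apply Finset.prod_congr rfl
        intro m _
        rw [map_div₀, map_sub, map_add, Complex.conj_conj, hconjs]
        rw [show -s - b m = -(s + b m) by ring,
          show -s + (starRingEnd ℂ) (b m) = -(s - (starRingEnd ℂ) (b m)) by ring,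
          neg_div_neg_eq]
    have hAB : (∏ m ∈ Finset.range k, (s - (starRingEnd ℂ) (b m)) / (s + b m)) *
        (∏ m ∈ Finset.range k, (s + b m) / (s - (starRingEnd ℂ) (b m))) = 1 := by
      rw [← Finset.prod_mul_distrib]
      apply Finset.prod_eq_one
      intro m _
      rw [div_mul_div_comm, mul_comm (s - (starRingEnd ℂ) (b m)) (s + b m),
        div_self (mul_ne_zero (hsplus m) (hsminus m))]
    have hconj2 : (starRingEnd ℂ) (b k) - s = (starRingEnd ℂ) (s + b k) := by
      rw [map_add, hconjs]; ring
    have hnsq : Complex.normSq (s + b k) = (b k).re ^ 2 + (ω + (b k).im) ^ 2 := by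
      rw [Complex.normSq_apply, Complex.add_re, Complex.add_im, hsdef]
      simp
      ring
    have hden : (s + b k) * ((starRingEnd ℂ) (b k) - s) =
        (((b k).re ^ 2 + (ω + (b k).im) ^ 2 : ℝ) : ℂ) := by
      rw [hconj2, Complex.mul_conj, hnsq]
    have hck2 : (Real.sqrt (2 * (b k).re) : ℂ) * (Real.sqrt (2 * (b k).re) : ℂ) =
        ((2 * (b k).re : ℝ) : ℂ) := by
      rw [← Complex.ofReal_mul, Real.mul_self_sqrt (by linarith)]
    rw [hconjφ, hφ k s,
      alg_id2 (Real.sqrt (2 * (b k).re) : ℂ) (s + b k) ((starRingEnd ℂ) (b k) - s)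
        (∏ m ∈ Finset.range k, (s - (starRingEnd ℂ) (b m)) / (s + b m))
        (∏ m ∈ Finset.range k, (s + b m) / (s - (starRingEnd ℂ) (b m))),
      hAB, mul_one, hck2, hden, Complex.ofReal_div]
  calc (1 / (2 * Real.pi) : ℂ) *
        ∫ ω : ℝ, φ k (ω * I) * (starRingEnd ℂ) (φ k (ω * I))
      = (1 / (2 * Real.pi) : ℂ) *
          ∫ ω : ℝ, ((2 * (b k).re / ((b k).re ^ 2 + (ω + (b k).im) ^ 2) : ℝ) : ℂ) := by
        congr 1
        congr 1
        funext ω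
        exact hid ω
    _ = (1 / (2 * Real.pi) : ℂ) *
          (((∫ ω : ℝ, 2 * (b k).re / ((b k).re ^ 2 + (ω + (b k).im) ^ 2)) : ℝ) : ℂ) := by
        rw [show (∫ ω : ℝ, ((2 * (b k).re / ((b k).re ^ 2 + (ω + (b k).im) ^ 2) : ℝ) : ℂ))
            = (((∫ ω : ℝ, 2 * (b k).re / ((b k).re ^ 2 + (ω + (b k).im) ^ 2)) : ℝ) : ℂ)
          from integral_ofReal]
    _ = (1 / (2 * Real.pi) : ℂ) * ((2 * Real.pi : ℝ) : ℂ) := by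
        rw [real_int (b k).re (b k).im hx0]
    _ = 1 := by
        rw [Complex.ofReal_mul]
        have hpi : ((Real.pi : ℂ)) ≠ 0 := by
          simpa using Complex.ofReal_ne_zero.2 Real.pi_ne_zero
        field_simp
        norm_num

end ML

end

open Complex MeasureTheory Finset

/-- The Müntz–Laguerre functions φ_k (poles −b_k with Re b_k > 0) form an orthonormal
system on the boundary of H² of the right half-plane:
(1/2π) ∫ φ_j(iω) conj(φ_k(iω)) dω = δ_{jk}. (Indexing: φ_k here is φ_{k+1} of the paper.) -/
theorem muntz_laguerre_orthonormal (b : ℕ → ℂ) (hb : ∀ k, 0 < (b k).re)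
    (φ : ℕ → ℂ → ℂ)
    (hφ : ∀ k s, φ k s = (Real.sqrt (2 * (b k).re) : ℂ) / (s + b k) *
      ∏ k' ∈ Finset.range k, (s - (starRingEnd ℂ) (b k')) / (s + b k')) :
    ∀ j k : ℕ,
      (1 / (2 * Real.pi) : ℂ) *
        ∫ ω : ℝ, φ j (ω * Complex.I) * (starRingEnd ℂ) (φ k (ω * Complex.I)) =
      if j = k then 1 else 0 := by
  intro j k
  rcases lt_trichotomy j k with h | h | h
  · rw [ML.offdiag b hb φ hφ h, mul_zero, if_neg (Nat.ne_of_lt h)]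
  · subst h
    rw [if_pos rfl]
    exact ML.diag b hb φ hφ j
  · have h0 : (∫ ω : ℝ, φ j ((ω:ℂ) * Complex.I) *
        (starRingEnd ℂ) (φ k ((ω:ℂ) * Complex.I))) = 0 := by
      have hc : ∀ ω : ℝ, φ j ((ω:ℂ) * Complex.I) *
          (starRingEnd ℂ) (φ k ((ω:ℂ) * Complex.I)) =
          (starRingEnd ℂ) (φ k ((ω:ℂ) * Complex.I) *
            (starRingEnd ℂ) (φ j ((ω:ℂ) * Complex.I))) := by
        intro ω
        rw [map_mul, Complex.conj_conj]
        ring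
      calc (∫ ω : ℝ, φ j ((ω:ℂ) * Complex.I) *
            (starRingEnd ℂ) (φ k ((ω:ℂ) * Complex.I)))
          = ∫ ω : ℝ, (starRingEnd ℂ) (φ k ((ω:ℂ) * Complex.I) *
              (starRingEnd ℂ) (φ j ((ω:ℂ) * Complex.I))) := by
            congr 1; funext ω; exact hc ω
        _ = (starRingEnd ℂ) (∫ ω : ℝ, φ k ((ω:ℂ) * Complex.I) *
              (starRingEnd ℂ) (φ j ((ω:ℂ) * Complex.I))) := integral_conj
        _ = 0 := by rw [ML.offdiag b hb φ hφ h, map_zero]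
    rw [h0, mul_zero, if_neg h.ne']
end

section
/- Consider the optimization problem: minimize (1/2)‖M‖_F² − ρ + (1/(νm)) Σᵢ ξᵢ over symmetric matrices M in a closed convex set C, ρ ∈ ℝ, ξ ∈ ℝ^m, subject to ⟨M, Γᵢ⟩ ≥ ρ − ξᵢ and ξᵢ ≥ 0 for all i, where ν ∈ (0,1) and the Γᵢ are fixed matrices. If (M*, ρ*, ξ*) is an optimal solution, then the number of indices i with ξᵢ* > 0 is at most νm; equivalently, at most a fraction ν of the constraints are violated (ξᵢ* > 0) at optimality. -/
open Matrix Finset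

/-- ν-property of the soft OC-SVM: at an optimal solution of
min (1/2)‖M‖_F² − ρ + (1/(νm)) Σ ξᵢ s.t. ⟨M,Γᵢ⟩ ≥ ρ − ξᵢ, ξᵢ ≥ 0, M ∈ C,
at most a fraction ν of the slacks are strictly positive. -/
theorem ocsvm_nu_property {n m : ℕ} (hm : 0 < m) (ν : ℝ) (hν : ν ∈ Set.Ioo (0:ℝ) 1)
    (Γ : Fin m → Matrix (Fin n) (Fin n) ℝ)
    (C : Set (Matrix (Fin n) (Fin n) ℝ)) (hC : ∀ M ∈ C, M.IsSymm)
    (Mstar : Matrix (Fin n) (Fin n) ℝ) (ρstar : ℝ) (ξstar : Fin m → ℝ)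
    -- feasibility of the optimal solution
    (hfeas : Mstar ∈ C ∧ (∀ i, (Mstarᵀ * Γ i).trace ≥ ρstar - ξstar i) ∧ ∀ i, 0 ≤ ξstar i)
    -- optimality among all feasible points
    (hopt : ∀ M ∈ C, ∀ ρ : ℝ, ∀ ξ : Fin m → ℝ,
      (∀ i, (Mᵀ * Γ i).trace ≥ ρ - ξ i) → (∀ i, 0 ≤ ξ i) →
      (1/2) * (Mstarᵀ * Mstar).trace - ρstar + (1/(ν * m)) * ∑ i, ξstar i ≤
        (1/2) * (Mᵀ * M).trace - ρ + (1/(ν * m)) * ∑ i, ξ i) :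
    ((Finset.univ.filter (fun i => 0 < ξstar i)).card : ℝ) ≤ ν * m := by
  obtain ⟨hMC, hcon, hξ⟩ := hfeas
  have hνm : 0 < ν * m := by
    have := hν.1
    positivity
  set S := Finset.univ.filter (fun i => 0 < ξstar i) with hS
  rcases S.eq_empty_or_nonempty with he | hne
  · rw [he]; simpa using hνm.le
  · set ε := S.inf' hne ξstar with hε
    have hεpos : 0 < ε := by
      rw [hε, Finset.lt_inf'_iff]
      intro i hi
      exact (Finset.mem_filter.mp hi).2
    have hεle : ∀ i ∈ S, ε ≤ ξstar i := fun i hi => Finset.inf'_le _ hi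
    set ξ' : Fin m → ℝ := fun i => max (ξstar i - ε) 0 with hξ'
    have hfeas' : ∀ i, (Mstarᵀ * Γ i).trace ≥ (ρstar - ε) - ξ' i := by
      intro i
      have h1 : (ρstar - ε) - ξ' i ≤ ρstar - ξstar i := by
        have : ξstar i - ε ≤ ξ' i := le_max_left _ _
        linarith
      exact le_trans h1 (hcon i)
    have hξ'0 : ∀ i, 0 ≤ ξ' i := fun i => le_max_right _ _
    have key := hopt Mstar hMC (ρstar - ε) ξ' hfeas' hξ'0
    have hsum : ∑ i, ξ' i = ∑ i, ξstar i - ε * S.card := by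
      have : ∑ i, (ξstar i - ξ' i) = ∑ i ∈ S, ε := by
        rw [← Finset.sum_filter_add_sum_filter_not Finset.univ (fun i => 0 < ξstar i)
          (fun i => ξstar i - ξ' i)]
        have h1 : ∑ i ∈ S, (ξstar i - ξ' i) = ∑ i ∈ S, ε := by
          apply Finset.sum_congr rfl
          intro i hi
          have := hεle i hi
          simp only [hξ']
          rw [max_eq_left (by linarith)]
          ring
        have h2 : ∑ i ∈ Finset.univ.filter (fun i => ¬ 0 < ξstar i), (ξstar i - ξ' i) = 0 := by
          apply Finset.sum_eq_zero
          intro i hi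
          have h0 : ξstar i = 0 := le_antisymm (not_lt.mp (Finset.mem_filter.mp hi).2) (hξ i)
          simp [hξ', h0, hεpos.le]
        rw [h1, h2, add_zero]
      have hc : ∑ i ∈ S, (ε:ℝ) = ε * S.card := by
        rw [Finset.sum_const, nsmul_eq_mul, mul_comm]
      rw [Finset.sum_sub_distrib] at this
      linarith [this, hc ▸ this]
    rw [hsum] at key
    have : (1/(ν*m)) * (ε * S.card) ≤ ε := by nlinarith [key]
    have h2 : (S.card : ℝ) ≤ ν * m := by
      rw [div_mul_eq_mul_div, one_mul, div_le_iff₀ hνm] at this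
      nlinarith
    exact h2
end
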